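/- Let C and C̄ form a timelike (1,3)-Bertrand pair in E⁴₂ via the map φ and real constants α, β with c̄(φ(s)) = c(s) + α·n₁(s) + β·n₃(s) for all s. Then for all s: φ'(s)·t̄(φ(s)) = (1 + α·k₁(s))·t(s) + (α·k₂(s) - β·k₃(s))·n₂(s), the identity (φ'(s))² = (1 + α·k₁(s))² - (α·k₂(s) - β·k₃(s))² holds, and there exist real constants p, q with p² - q² = 1 such that 1 + α·k₁(s) = p·φ'(s) and α·k₂(s) - β·k₃(s) = q·φ'(s) for all s. -/

import Mathlib

noncomputable section

/-- The indefinite metric of semi-Euclidean space `E⁴₂`: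
`g(v,w) = -v₁w₁ - v₂w₂ + v₃w₃ + v₄w₄`. -/
def g4 (v w : Fin 4 → ℝ) : ℝ :=
  -(v 0 * w 0) - v 1 * w 1 + v 2 * w 2 + v 3 * w 3

/-- The semi-Euclidean norm `‖v‖ = √|g(v,v)|` in `E⁴₂`. -/
def nrm4 (v : Fin 4 → ℝ) : ℝ := Real.sqrt |g4 v v|

/-- A `C^∞`-special timelike Frenet curve in `E⁴₂`: a unit-speed timelike curve
with Frenet frame `t, n₁, n₂, n₃` (with `t, n₁` timelike and `n₂, n₃` spacelike)
and nowhere-vanishing curvatures `k₁, k₂, k₃` satisfying the Frenet equations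
`t' = -k₁·n₁`, `n₁' = k₁·t + k₂·n₂`, `n₂' = k₂·n₁ + k₃·n₃`, `n₃' = -k₃·n₂`. -/
structure TimelikeFrenetE42 where
  c : ℝ → Fin 4 → ℝ
  t : ℝ → Fin 4 → ℝ
  n1 : ℝ → Fin 4 → ℝ
  n2 : ℝ → Fin 4 → ℝ
  n3 : ℝ → Fin 4 → ℝ
  k1 : ℝ → ℝ
  k2 : ℝ → ℝ
  k3 : ℝ → ℝ
  smooth_c : ContDiff ℝ (⊤ : ℕ∞) c
  smooth_t : ContDiff ℝ (⊤ : ℕ∞) t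
  smooth_n1 : ContDiff ℝ (⊤ : ℕ∞) n1
  smooth_n2 : ContDiff ℝ (⊤ : ℕ∞) n2
  smooth_n3 : ContDiff ℝ (⊤ : ℕ∞) n3
  smooth_k1 : ContDiff ℝ (⊤ : ℕ∞) k1
  smooth_k2 : ContDiff ℝ (⊤ : ℕ∞) k2
  smooth_k3 : ContDiff ℝ (⊤ : ℕ∞) k3
  deriv_c : ∀ s, HasDerivAt c (t s) s
  unit_t : ∀ s, g4 (t s) (t s) = -1
  unit_n1 : ∀ s, g4 (n1 s) (n1 s) = -1
  unit_n2 : ∀ s, g4 (n2 s) (n2 s) = 1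
  unit_n3 : ∀ s, g4 (n3 s) (n3 s) = 1
  orth_t_n1 : ∀ s, g4 (t s) (n1 s) = 0
  orth_t_n2 : ∀ s, g4 (t s) (n2 s) = 0
  orth_t_n3 : ∀ s, g4 (t s) (n3 s) = 0
  orth_n1_n2 : ∀ s, g4 (n1 s) (n2 s) = 0
  orth_n1_n3 : ∀ s, g4 (n1 s) (n3 s) = 0
  orth_n2_n3 : ∀ s, g4 (n2 s) (n3 s) = 0
  k1_ne : ∀ s, k1 s ≠ 0
  k2_ne : ∀ s, k2 s ≠ 0
  k3_ne : ∀ s, k3 s ≠ 0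
  frenet_t : ∀ s, HasDerivAt t (-(k1 s) • n1 s) s
  frenet_n1 : ∀ s, HasDerivAt n1 (k1 s • t s + k2 s • n2 s) s
  frenet_n2 : ∀ s, HasDerivAt n2 (k2 s • n1 s + k3 s • n3 s) s
  frenet_n3 : ∀ s, HasDerivAt n3 (-(k3 s) • n2 s) s

lemma g4_add_left (u v w : Fin 4 → ℝ) : g4 (u + v) w = g4 u w + g4 v w := by
  simp [g4, Pi.add_apply]; ring

lemma g4_smul_left (a : ℝ) (u w : Fin 4 → ℝ) : g4 (a • u) w = a * g4 u w := by
  simp [g4, Pi.smul_apply, smul_eq_mul]; ring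

lemma g4_comm (u v : Fin 4 → ℝ) : g4 u v = g4 v u := by
  simp [g4]; ring

lemma g4_sq1 (a : ℝ) (u : Fin 4 → ℝ) : g4 (a • u) (a • u) = a ^ 2 * g4 u u := by
  simp [g4, Pi.smul_apply, smul_eq_mul]; ring

lemma g4_sq2 (a b : ℝ) (u v : Fin 4 → ℝ) :
    g4 (a • u + b • v) (a • u + b • v) =
      a ^ 2 * g4 u u + 2 * (a * b) * g4 u v + b ^ 2 * g4 v v := by
  simp [g4, Pi.add_apply, Pi.smul_apply, smul_eq_mul]; ring

lemma g4_span_orth {u1 u3 w : Fin 4 → ℝ} (h1 : g4 u1 w = 0) (h3 : g4 u3 w = 0)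
    {v : Fin 4 → ℝ} (hv : v ∈ Submodule.span ℝ ({u1, u3} : Set (Fin 4 → ℝ))) :
    g4 v w = 0 := by
  let f : (Fin 4 → ℝ) →ₗ[ℝ] ℝ :=
    { toFun := fun v => g4 v w
      map_add' := fun a b => g4_add_left a b w
      map_smul' := fun a b => g4_smul_left a b w }
  have hle : Submodule.span ℝ ({u1, u3} : Set (Fin 4 → ℝ)) ≤ LinearMap.ker f := by
    rw [Submodule.span_le]
    intro x hx
    simp only [Set.mem_insert_iff, Set.mem_singleton_iff] at hx
    rcases hx with rfl | rfl
    · simpa [f, LinearMap.mem_ker] using h1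
    · simpa [f, LinearMap.mem_ker] using h3
  exact hle hv

/-- For a timelike `(1,3)`-Bertrand pair in `E⁴₂` with constant `α, β`:
`φ'(s)·t̄(φ(s)) = (1 + α·k₁(s))·t(s) + (α·k₂(s) - β·k₃(s))·n₂(s)`, the identity
`(φ'(s))² = (1 + α·k₁(s))² - (α·k₂(s) - β·k₃(s))²` holds, and there are constants
`p, q` with `p² - q² = 1` such that `1 + α·k₁ = p·φ'` and `α·k₂ - β·k₃ = q·φ'`. -/
theorem bertrand13_E42_tangent_decomposition
    (C Cb : TimelikeFrenetE42) (φ : ℝ → ℝ) (α β : ℝ)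
    (hφ : ContDiff ℝ (⊤ : ℕ∞) φ) (hφ' : ∀ s, deriv φ s ≠ 0)
    (hpos : ∀ s, Cb.c (φ s) = C.c s + α • C.n1 s + β • C.n3 s)
    (hspan : ∀ s, Submodule.span ℝ ({Cb.n1 (φ s), Cb.n3 (φ s)} : Set (Fin 4 → ℝ)) =
      Submodule.span ℝ ({C.n1 s, C.n3 s} : Set (Fin 4 → ℝ))) :
    (∀ s, (deriv φ s) • Cb.t (φ s) =
        (1 + α * C.k1 s) • C.t s + (α * C.k2 s - β * C.k3 s) • C.n2 s) ∧
    (∀ s, (deriv φ s) ^ 2 = (1 + α * C.k1 s) ^ 2 - (α * C.k2 s - β * C.k3 s) ^ 2) ∧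
    (∃ p q : ℝ, p ^ 2 - q ^ 2 = 1 ∧
      ∀ s, 1 + α * C.k1 s = p * deriv φ s ∧ α * C.k2 s - β * C.k3 s = q * deriv φ s) := by
  classical
  have hdiffφ : ∀ s, HasDerivAt φ (deriv φ s) s := fun s =>
    ((hφ.differentiable (by simp)) s).hasDerivAt
  have hφ2 : ContDiff ℝ (⊤ : ℕ∞) (deriv φ) := (contDiff_infty_iff_deriv.mp hφ).2
  have hdiffφ' : ∀ s, HasDerivAt (deriv φ) (deriv (deriv φ) s) s := fun s =>
    ((hφ2.differentiable (by simp)) s).hasDerivAt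
  have hk1' : ∀ s, HasDerivAt C.k1 (deriv C.k1 s) s := fun s =>
    ((C.smooth_k1.differentiable (by simp)) s).hasDerivAt
  have hk2' : ∀ s, HasDerivAt C.k2 (deriv C.k2 s) s := fun s =>
    ((C.smooth_k2.differentiable (by simp)) s).hasDerivAt
  have hk3' : ∀ s, HasDerivAt C.k3 (deriv C.k3 s) s := fun s =>
    ((C.smooth_k3.differentiable (by simp)) s).hasDerivAt
  -- abbreviations
  set A : ℝ → ℝ := fun s => 1 + α * C.k1 s with hA
  set B : ℝ → ℝ := fun s => α * C.k2 s - β * C.k3 s with hB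
  -- Part 1
  have key1 : ∀ s, (deriv φ s) • Cb.t (φ s) = A s • C.t s + B s • C.n2 s := by
    intro s
    have hL : HasDerivAt (fun s => Cb.c (φ s)) (deriv φ s • Cb.t (φ s)) s :=
      (Cb.deriv_c (φ s)).scomp s (hdiffφ s)
    have hfun : (fun s => Cb.c (φ s)) = fun s => C.c s + α • C.n1 s + β • C.n3 s :=
      funext hpos
    rw [hfun] at hL
    have hR : HasDerivAt (fun s => C.c s + α • C.n1 s + β • C.n3 s)
        (C.t s + α • (C.k1 s • C.t s + C.k2 s • C.n2 s) + β • (-(C.k3 s) • C.n2 s)) s :=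
      ((C.deriv_c s).add ((C.frenet_n1 s).const_smul α)).add
        ((C.frenet_n3 s).const_smul β)
    have h := hL.unique hR
    rw [h]
    simp only [hA, hB]
    module
  -- Part 2
  have key2 : ∀ s, (deriv φ s) ^ 2 = A s ^ 2 - B s ^ 2 := by
    intro s
    have h := congrArg (fun v => g4 v v) (key1 s)
    simp only [g4_sq1, g4_sq2] at h
    rw [Cb.unit_t (φ s), C.unit_t s, C.unit_n2 s, C.orth_t_n2 s] at h
    nlinarith [h]
  -- orthogonality of Cb's normal plane to t and n2
  have horth : ∀ s (w : Fin 4 → ℝ), g4 (C.n1 s) w = 0 → g4 (C.n3 s) w = 0 →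
      g4 (Cb.n1 (φ s)) w = 0 ∧ g4 (Cb.n3 (φ s)) w = 0 := by
    intro s w h1 h3
    have hm1 : Cb.n1 (φ s) ∈ Submodule.span ℝ ({C.n1 s, C.n3 s} : Set (Fin 4 → ℝ)) := by
      rw [← hspan s]
      exact Submodule.subset_span (by simp)
    have hm3 : Cb.n3 (φ s) ∈ Submodule.span ℝ ({C.n1 s, C.n3 s} : Set (Fin 4 → ℝ)) := by
      rw [← hspan s]
      exact Submodule.subset_span (by simp)
    exact ⟨g4_span_orth h1 h3 hm1, g4_span_orth h1 h3 hm3⟩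
  -- second derivative relation
  have key3 : ∀ s, α * deriv C.k1 s * deriv φ s = A s * deriv (deriv φ) s ∧
      (α * deriv C.k2 s - β * deriv C.k3 s) * deriv φ s = B s * deriv (deriv φ) s := by
    intro s
    have hL : HasDerivAt (fun s => deriv φ s • Cb.t (φ s))
        (deriv φ s • (deriv φ s • (-(Cb.k1 (φ s)) • Cb.n1 (φ s))) +
          deriv (deriv φ) s • Cb.t (φ s)) s :=
      (hdiffφ' s).smul ((Cb.frenet_t (φ s)).scomp s (hdiffφ s))
    have hfun : (fun s => deriv φ s • Cb.t (φ s)) = fun s => A s • C.t s + B s • C.n2 s :=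
      funext key1
    rw [hfun] at hL
    have hAd : HasDerivAt A (α * deriv C.k1 s) s := by
      exact (((hk1' s).const_mul α).const_add 1)
    have hBd : HasDerivAt B (α * deriv C.k2 s - β * deriv C.k3 s) s :=
      ((hk2' s).const_mul α).sub ((hk3' s).const_mul β)
    have hR : HasDerivAt (fun s => A s • C.t s + B s • C.n2 s)
        ((A s • (-(C.k1 s) • C.n1 s) + (α * deriv C.k1 s) • C.t s) +
         (B s • (C.k2 s • C.n1 s + C.k3 s • C.n3 s) +
           (α * deriv C.k2 s - β * deriv C.k3 s) • C.n2 s)) s :=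
      (hAd.smul (C.frenet_t s)).add (hBd.smul (C.frenet_n2 s))
    have hE := hL.unique hR
    -- project onto w via g4 · w
    have proj : ∀ w : Fin 4 → ℝ,
        deriv φ s * (deriv φ s * (-(Cb.k1 (φ s)) * g4 (Cb.n1 (φ s)) w)) +
          deriv (deriv φ) s * g4 (Cb.t (φ s)) w =
        (A s * (-(C.k1 s) * g4 (C.n1 s) w) + (α * deriv C.k1 s) * g4 (C.t s) w) +
         (B s * (C.k2 s * g4 (C.n1 s) w + C.k3 s * g4 (C.n3 s) w) +
           (α * deriv C.k2 s - β * deriv C.k3 s) * g4 (C.n2 s) w) := by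
      intro w
      have h := congrArg (fun v => g4 v w) hE
      simpa only [g4_add_left, g4_smul_left] using h
    have projk : ∀ w : Fin 4 → ℝ,
        deriv φ s * g4 (Cb.t (φ s)) w = A s * g4 (C.t s) w + B s * g4 (C.n2 s) w := by
      intro w
      have h := congrArg (fun v => g4 v w) (key1 s)
      simpa only [g4_add_left, g4_smul_left] using h
    constructor
    · -- w = C.t s
      have e1 : g4 (C.n1 s) (C.t s) = 0 := (g4_comm _ _).trans (C.orth_t_n1 s)
      have e2 : g4 (C.n3 s) (C.t s) = 0 := (g4_comm _ _).trans (C.orth_t_n3 s)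
      have e3 : g4 (C.n2 s) (C.t s) = 0 := (g4_comm _ _).trans (C.orth_t_n2 s)
      have hnn := horth s (C.t s) e1 e2
      have h1 := proj (C.t s)
      have h2 := projk (C.t s)
      simp only [hnn.1, e1, e2, e3, C.unit_t s] at h1 h2
      linear_combination (deriv φ s) * h1 - (deriv (deriv φ) s) * h2
    · -- w = C.n2 s
      have e1 : g4 (C.n1 s) (C.n2 s) = 0 := C.orth_n1_n2 s
      have e2 : g4 (C.n3 s) (C.n2 s) = 0 := (g4_comm _ _).trans (C.orth_n2_n3 s)
      have e3 : g4 (C.t s) (C.n2 s) = 0 := C.orth_t_n2 s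
      have hnn := horth s (C.n2 s) e1 e2
      have h1 := proj (C.n2 s)
      have h2 := projk (C.n2 s)
      simp only [hnn.1, e1, e2, e3, C.unit_n2 s] at h1 h2
      linear_combination (deriv (deriv φ) s) * h2 - (deriv φ s) * h1
  -- constancy
  have hconstA : ∀ s, A s / deriv φ s = A 0 / deriv φ 0 := by
    have hd : ∀ s, HasDerivAt (fun s => A s / deriv φ s) 0 s := by
      intro s
      have hAd : HasDerivAt A (α * deriv C.k1 s) s := by
        exact (((hk1' s).const_mul α).const_add 1)
      have := hAd.div (hdiffφ' s) (hφ' s)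
      have hz : (α * deriv C.k1 s * deriv φ s - A s * deriv (deriv φ) s) /
          deriv φ s ^ 2 = 0 := by
        rw [(key3 s).1]; ring_nf
      rwa [hz] at this
    intro s
    exact is_const_of_deriv_eq_zero (fun x => (hd x).differentiableAt)
      (fun x => (hd x).deriv) s 0
  have hconstB : ∀ s, B s / deriv φ s = B 0 / deriv φ 0 := by
    have hd : ∀ s, HasDerivAt (fun s => B s / deriv φ s) 0 s := by
      intro s
      have hBd : HasDerivAt B (α * deriv C.k2 s - β * deriv C.k3 s) s :=
        ((hk2' s).const_mul α).sub ((hk3' s).const_mul β)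
      have := hBd.div (hdiffφ' s) (hφ' s)
      have hz : ((α * deriv C.k2 s - β * deriv C.k3 s) * deriv φ s -
          B s * deriv (deriv φ) s) / deriv φ s ^ 2 = 0 := by
        rw [(key3 s).2]; ring_nf
      rwa [hz] at this
    intro s
    exact is_const_of_deriv_eq_zero (fun x => (hd x).differentiableAt)
      (fun x => (hd x).deriv) s 0
  refine ⟨key1, key2, A 0 / deriv φ 0, B 0 / deriv φ 0, ?_, fun s => ⟨?_, ?_⟩⟩
  · have h2 := key2 0
    have hne := hφ' 0
    field_simp
    nlinarith [h2, sq_nonneg (deriv φ 0)]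
  · have h := hconstA s
    rw [div_eq_div_iff (hφ' s) (hφ' 0)] at h
    simp only [hA] at h
    rw [div_mul_eq_mul_div, eq_div_iff (hφ' 0)]
    simp only [hA]
    linear_combination h
  · have h := hconstB s
    rw [div_eq_div_iff (hφ' s) (hφ' 0)] at h
    simp only [hB] at h
    rw [div_mul_eq_mul_div, eq_div_iff (hφ' 0)]
    simp only [hB]
    linear_combination h
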